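/- Let μ, ν ∈ 𝒫₂(ℝ^d) and let μ(dx)k(x,dy) be a W₂-optimal coupling between μ and ν. Define 𝒯(x) = ∫ y k(x,dy) and η = 𝒯#μ. Then W₂²(μ,ν) = W₂²(μ,η) + ∫|y|² dν(y) − ∫|z|² dη(z), and the coupling (Id,𝒯)#μ is W₂-optimal between μ and η. -/

import Mathlib

open MeasureTheory ProbabilityTheory Set Filter
open scoped ENNReal BoundedContinuousFunction

noncomputable section

abbrev Ed (d : ℕ) := EuclideanSpace ℝ (Fin d)

/-- π is a coupling of μ and ν. -/
def IsCoupling {d : ℕ} (π : Measure (Ed d × Ed d)) (μ ν : Measure (Ed d)) : Prop :=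
  π.map Prod.fst = μ ∧ π.map Prod.snd = ν

/-- quadratic transport cost of a coupling. -/
def cost {d : ℕ} (π : Measure (Ed d × Ed d)) : ℝ := ∫ p, ‖p.2 - p.1‖ ^ 2 ∂π

/-- squared quadratic Wasserstein distance. -/
def W2sq {d : ℕ} (μ ν : Measure (Ed d)) : ℝ := sInf (cost '' {π | IsCoupling π μ ν})

/-- π is a W₂-optimal coupling between μ and ν. -/
def IsOptimalCoupling {d : ℕ} (π : Measure (Ed d × Ed d)) (μ ν : Measure (Ed d)) : Prop :=
  IsCoupling π μ ν ∧ cost π = W2sq μ ν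

/-- the coupling (Id, T)#μ given by a map T. -/
def givenByMap {d : ℕ} (μ : Measure (Ed d)) (T : Ed d → Ed d) : Measure (Ed d × Ed d) :=
  μ.map (fun x => (x, T x))

/-- finite second moment. -/
def FiniteSecondMoment {d : ℕ} (μ : Measure (Ed d)) : Prop :=
  Integrable (fun x => ‖x‖ ^ 2) μ

/-- convex order: ∫φ dη ≤ ∫φ dν for all convex φ whose integrals make sense. -/
def ConvexOrder {d : ℕ} (η ν : Measure (Ed d)) : Prop :=
  ∀ φ : Ed d → ℝ, ConvexOn ℝ Set.univ φ → Integrable φ η → Integrable φ ν →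
    ∫ x, φ x ∂η ≤ ∫ y, φ y ∂ν



open scoped RealInnerProductSpace

section AuxLemmas

variable {d : ℕ}

lemma sq_norm_sub_le (a b : Ed d) : ‖a - b‖ ^ 2 ≤ 2 * ‖a‖ ^ 2 + 2 * ‖b‖ ^ 2 := by
  have h := norm_sub_le a b
  have h2 : ‖a - b‖ ^ 2 ≤ (‖a‖ + ‖b‖) ^ 2 := by
    have := pow_le_pow_left₀ (norm_nonneg (a - b)) h 2
    simpa using this
  nlinarith [sq_nonneg (‖a‖ - ‖b‖)]

lemma integrable_of_sq {α : Type*} [MeasurableSpace α] {ρ : Measure α} [IsFiniteMeasure ρ]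
    {f : α → Ed d} (hm : AEStronglyMeasurable f ρ)
    (h2 : Integrable (fun a => ‖f a‖ ^ 2) ρ) : Integrable f ρ := by
  have hb : Integrable (fun a => ‖f a‖ ^ 2 + 1) ρ := h2.add (integrable_const 1)
  refine Integrable.mono' hb hm ?_
  filter_upwards with a
  rcases le_or_gt ‖f a‖ 1 with h | h
  · nlinarith [norm_nonneg (f a), sq_nonneg (‖f a‖)]
  · nlinarith [norm_nonneg (f a)]

lemma integral_norm_sub_sq {ρ : Measure (Ed d)} [IsProbabilityMeasure ρ]
    (h2 : Integrable (fun y => ‖y‖ ^ 2) ρ) (c : Ed d) :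
    ∫ y, ‖y - c‖ ^ 2 ∂ρ = (∫ y, ‖y‖ ^ 2 ∂ρ) - 2 * ⟪∫ y, y ∂ρ, c⟫ + ‖c‖ ^ 2 := by
  have hid : Integrable (fun y : Ed d => y) ρ := integrable_of_sq aestronglyMeasurable_id h2
  have hinner : Integrable (fun y : Ed d => ⟪y, c⟫) ρ := by
    refine Integrable.mono' (hid.norm.const_mul ‖c‖) ?_ ?_
    · exact (Continuous.inner continuous_id continuous_const).aestronglyMeasurable
    · filter_upwards with y
      calc ‖⟪y, c⟫‖ = |⟪y, c⟫| := rfl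
        _ ≤ ‖y‖ * ‖c‖ := abs_real_inner_le_norm y c
        _ = ‖c‖ * ‖y‖ := mul_comm _ _
  have hpt : ∀ y : Ed d, ‖y - c‖ ^ 2 = ‖y‖ ^ 2 - 2 * ⟪y, c⟫ + ‖c‖ ^ 2 :=
    fun y => norm_sub_sq_real y c
  have hcm : Integrable (fun y : Ed d => 2 * ⟪y, c⟫) ρ := hinner.const_mul 2
  have hsub : Integrable (fun y : Ed d => ‖y‖ ^ 2 - 2 * ⟪y, c⟫) ρ := h2.sub hcm
  rw [integral_congr_ae (Eventually.of_forall hpt)]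
  rw [integral_add hsub (integrable_const _),
    integral_sub h2 hcm, MeasureTheory.integral_const_mul, integral_const]
  have : ∫ y, ⟪y, c⟫ ∂ρ = ⟪∫ y, y ∂ρ, c⟫ := by
    calc ∫ y, ⟪y, c⟫ ∂ρ = ∫ y, ⟪c, y⟫ ∂ρ := by
          congr 1; funext y; exact real_inner_comm c y
      _ = ⟪c, ∫ y, y ∂ρ⟫ := integral_inner hid c
      _ = ⟪∫ y, y ∂ρ, c⟫ := real_inner_comm _ _
  rw [this]
  simp [measure_univ]

lemma integral_norm_sub_sq' {ρ : Measure (Ed d)} [IsProbabilityMeasure ρ]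
    (h2 : Integrable (fun y => ‖y‖ ^ 2) ρ) (c : Ed d) :
    ∫ y, ‖y - c‖ ^ 2 ∂ρ
      = ((∫ y, ‖y‖ ^ 2 ∂ρ) - ‖∫ y, y ∂ρ‖ ^ 2) + ‖(∫ y, y ∂ρ) - c‖ ^ 2 := by
  rw [integral_norm_sub_sq h2 c, norm_sub_sq_real]; ring

lemma normsq_integral_le {ρ : Measure (Ed d)} [IsProbabilityMeasure ρ]
    (h2 : Integrable (fun y => ‖y‖ ^ 2) ρ) :
    ‖∫ y, y ∂ρ‖ ^ 2 ≤ ∫ y, ‖y‖ ^ 2 ∂ρ := by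
  have h := integral_norm_sub_sq' h2 (∫ y, y ∂ρ)
  have hnn : 0 ≤ ∫ y, ‖y - (∫ y, y ∂ρ)‖ ^ 2 ∂ρ := integral_nonneg fun y => by positivity
  simp only [sub_self, norm_zero] at h
  nlinarith

end AuxLemmas

section AuxCost

variable {d : ℕ}

lemma cost_nonneg (π : Measure (Ed d × Ed d)) : 0 ≤ cost π :=
  integral_nonneg fun p => by positivity

lemma isProb_of_coupling {π : Measure (Ed d × Ed d)} {μ η : Measure (Ed d)}
    [IsProbabilityMeasure μ] (hc : IsCoupling π μ η) : IsProbabilityMeasure π := by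
  constructor
  have h : π Set.univ = μ Set.univ := by
    rw [← hc.1, Measure.map_apply measurable_fst MeasurableSet.univ, Set.preimage_univ]
  rw [h, measure_univ]

lemma integrable_cost {π : Measure (Ed d × Ed d)} {μ η : Measure (Ed d)}
    [IsProbabilityMeasure μ] [IsProbabilityMeasure η]
    (hc : IsCoupling π μ η) (hμ : FiniteSecondMoment μ) (hη : FiniteSecondMoment η) :
    Integrable (fun p : Ed d × Ed d => ‖p.2 - p.1‖ ^ 2) π := by
  have h1 : Integrable (fun p : Ed d × Ed d => ‖p.1‖ ^ 2) π := by
    have h := hμ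
    rw [FiniteSecondMoment, ← hc.1,
      integrable_map_measure (measurable_norm.pow_const 2).aestronglyMeasurable
        measurable_fst.aemeasurable] at h
    exact h
  have h2 : Integrable (fun p : Ed d × Ed d => ‖p.2‖ ^ 2) π := by
    have h := hη
    rw [FiniteSecondMoment, ← hc.2,
      integrable_map_measure (measurable_norm.pow_const 2).aestronglyMeasurable
        measurable_snd.aemeasurable] at h
    exact h
  have hb : Integrable (fun p : Ed d × Ed d => 2 * ‖p.2‖ ^ 2 + 2 * ‖p.1‖ ^ 2) π :=
    (h2.const_mul 2).add (h1.const_mul 2)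
  refine Integrable.mono' hb
    ((continuous_snd.sub continuous_fst).norm.pow 2).aestronglyMeasurable ?_
  filter_upwards with p
  rw [Real.norm_of_nonneg (by positivity)]
  exact sq_norm_sub_le p.2 p.1

lemma W2sq_le_cost {π : Measure (Ed d × Ed d)} {μ η : Measure (Ed d)}
    (hc : IsCoupling π μ η) : W2sq μ η ≤ cost π := by
  refine csInf_le ⟨0, ?_⟩ ⟨π, hc, rfl⟩
  rintro c ⟨π', -, rfl⟩
  exact cost_nonneg π'

end AuxCost

/-- Pythagorean decomposition of W₂² along the barycentric projection, and optimality of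
the coupling (Id,T)#μ between μ and η = T#μ. -/
theorem stmt4 {d : ℕ} (μ ν : Measure (Ed d)) [IsProbabilityMeasure μ] [IsProbabilityMeasure ν]
    (hμ : FiniteSecondMoment μ) (hν : FiniteSecondMoment ν)
    (k : Kernel (Ed d) (Ed d)) [IsMarkovKernel k]
    (hopt : IsOptimalCoupling (μ.compProd k) μ ν)
    (T : Ed d → Ed d) (hT : T = fun x => ∫ y, y ∂(k x)) :
    W2sq μ ν = W2sq μ (μ.map T) + ∫ y, ‖y‖ ^ 2 ∂ν - ∫ z, ‖z‖ ^ 2 ∂(μ.map T) ∧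
      IsOptimalCoupling (givenByMap μ T) μ (μ.map T) := by
  obtain ⟨⟨hfst, hsnd⟩, hcost⟩ := hopt
  -- measurability of T
  have hTm : Measurable T := by
    rw [hT]
    exact (MeasureTheory.StronglyMeasurable.integral_kernel_prod_right
      (κ := k) (f := fun _ y => y)
      (measurable_snd.stronglyMeasurable)).measurable
  set η := μ.map T with hηdef
  haveI : IsProbabilityMeasure η := Measure.isProbabilityMeasure_map hTm.aemeasurable
  -- second moment of the second coordinate over μ ⊗ₘ k
  have hsm : Integrable (fun p : Ed d × Ed d => ‖p.2‖ ^ 2) (μ.compProd k) := by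
    have h := hν
    rw [FiniteSecondMoment, ← hsnd,
      integrable_map_measure (measurable_norm.pow_const 2).aestronglyMeasurable
        measurable_snd.aemeasurable] at h
    exact h
  have hk2 : ∀ᵐ x ∂μ, Integrable (fun y => ‖y‖ ^ 2) (k x) :=
    ((Measure.integrable_compProd_iff hsm.1).mp hsm).1
  have hI : Integrable (fun x => ∫ y, ‖y‖ ^ 2 ∂k x) μ := by
    have h := ((Measure.integrable_compProd_iff hsm.1).mp hsm).2
    simpa only [Real.norm_eq_abs, abs_pow, abs_norm] using h
  have hTx : ∀ x, T x = ∫ y, y ∂k x := fun x => by rw [hT]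
  have hTsq_le : ∀ᵐ x ∂μ, ‖T x‖ ^ 2 ≤ ∫ y, ‖y‖ ^ 2 ∂k x := by
    filter_upwards [hk2] with x hx
    rw [hTx x]
    exact normsq_integral_le hx
  have hTsq : Integrable (fun x => ‖T x‖ ^ 2) μ := by
    refine Integrable.mono' hI ((hTm.norm.pow_const 2).aestronglyMeasurable) ?_
    filter_upwards [hTsq_le] with x hx
    rwa [Real.norm_of_nonneg (by positivity)]
  have hη2 : FiniteSecondMoment η := by
    rw [FiniteSecondMoment, hηdef,
      integrable_map_measure (measurable_norm.pow_const 2).aestronglyMeasurable hTm.aemeasurable]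
    exact hTsq
  -- integral identities for the second moments
  have hνint : ∫ y, ‖y‖ ^ 2 ∂ν = ∫ x, ∫ y, ‖y‖ ^ 2 ∂k x ∂μ := by
    rw [← hsnd, integral_map measurable_snd.aemeasurable
      (measurable_norm.pow_const 2).aestronglyMeasurable, Measure.integral_compProd hsm]
  have hηint : ∫ z, ‖z‖ ^ 2 ∂η = ∫ x, ‖T x‖ ^ 2 ∂μ := by
    rw [hηdef, integral_map hTm.aemeasurable (measurable_norm.pow_const 2).aestronglyMeasurable]
  -- givenByMap μ T is a coupling of μ and η
  have hpm : Measurable fun x : Ed d => (x, T x) := measurable_id.prodMk hTm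
  have hgmc : IsCoupling (givenByMap μ T) μ η := by
    constructor
    · rw [givenByMap, Measure.map_map measurable_fst hpm]
      have : (Prod.fst ∘ fun x : Ed d => (x, T x)) = id := rfl
      rw [this, Measure.map_id]
    · rw [givenByMap, Measure.map_map measurable_snd hpm]
      rfl
  have hgmcost : cost (givenByMap μ T) = ∫ x, ‖T x - x‖ ^ 2 ∂μ := by
    rw [cost, givenByMap, integral_map hpm.aemeasurable
      (show Measurable (fun p : Ed d × Ed d => ‖p.2 - p.1‖ ^ 2) by fun_prop).aestronglyMeasurable]
  have hTxx : Integrable (fun x => ‖T x - x‖ ^ 2) μ := by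
    have hb : Integrable (fun x => 2 * ‖T x‖ ^ 2 + 2 * ‖x‖ ^ 2) μ :=
      (hTsq.const_mul 2).add (hμ.const_mul 2)
    refine Integrable.mono' hb (((hTm.sub measurable_id).norm.pow_const 2).aestronglyMeasurable) ?_
    filter_upwards with x
    rw [Real.norm_of_nonneg (by positivity)]
    exact sq_norm_sub_le (T x) x
  -- Step A : Pythagoras for the optimal coupling
  have costA : cost (μ.compProd k)
      = cost (givenByMap μ T) + (∫ y, ‖y‖ ^ 2 ∂ν - ∫ z, ‖z‖ ^ 2 ∂η) := by
    have hcostint : Integrable (fun p : Ed d × Ed d => ‖p.2 - p.1‖ ^ 2) (μ.compProd k) :=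
      integrable_cost ⟨hfst, hsnd⟩ hμ hν
    rw [cost, Measure.integral_compProd hcostint]
    have hae : ∀ᵐ x ∂μ, ∫ y, ‖y - x‖ ^ 2 ∂k x
        = ((∫ y, ‖y‖ ^ 2 ∂k x) - ‖T x‖ ^ 2) + ‖T x - x‖ ^ 2 := by
      filter_upwards [hk2] with x hx
      rw [integral_norm_sub_sq' hx x, ← hTx x]
    have hsub : Integrable (fun x => (∫ y, ‖y‖ ^ 2 ∂k x) - ‖T x‖ ^ 2) μ := hI.sub hTsq
    rw [integral_congr_ae hae, integral_add hsub hTxx, integral_sub hI hTsq,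
      hgmcost, hνint, hηint]
    ring
  -- Step B : optimality of givenByMap μ T
  -- the joint law m of (T x, y) under the optimal coupling, and its disintegration
  set g : Ed d × Ed d → Ed d × Ed d := fun p => (T p.1, p.2) with hgdef
  have hgmeas : Measurable g := (hTm.comp measurable_fst).prodMk measurable_snd
  set m : Measure (Ed d × Ed d) := (μ.compProd k).map g with hmdef
  haveI : IsProbabilityMeasure m := Measure.isProbabilityMeasure_map hgmeas.aemeasurable
  have hmfst : m.fst = η := by
    rw [Measure.fst, hmdef, Measure.map_map measurable_fst hgmeas]
    have h1 : (Prod.fst ∘ g) = T ∘ Prod.fst := rfl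
    rw [h1, ← Measure.map_map hTm measurable_fst, hfst]
  have hmsnd : m.map Prod.snd = ν := by
    rw [hmdef, Measure.map_map measurable_snd hgmeas]
    have h1 : (Prod.snd ∘ g) = Prod.snd := rfl
    rw [h1, hsnd]
  have hm2 : Integrable (fun p : Ed d × Ed d => ‖p.2‖ ^ 2) m := by
    rw [hmdef, integrable_map_measure
      (continuous_snd.norm.measurable.pow_const 2).aestronglyMeasurable hgmeas.aemeasurable]
    exact hsm
  have hmid : Integrable (fun p : Ed d × Ed d => p.2) m :=
    integrable_of_sq continuous_snd.aestronglyMeasurable hm2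
  have hintc : Integrable (fun p : Ed d × Ed d => p.2) (μ.compProd k) :=
    integrable_of_sq continuous_snd.aestronglyMeasurable hsm
  have hKint : Integrable (fun z => ∫ y, y ∂m.condKernel z) m.fst :=
    MeasureTheory.Integrable.integral_condKernel (f := fun p : Ed d × Ed d => p.2) hmid
  have hid_η : Integrable (fun z : Ed d => z) η :=
    integrable_of_sq aestronglyMeasurable_id hη2
  -- barycenter property of the disintegration kernel
  have hbary : ∀ᵐ z ∂η, ∫ y, y ∂m.condKernel z = z := by
    have key : (fun z => ∫ y, y ∂m.condKernel z) =ᵐ[m.fst] (fun z => z) := by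
      refine ae_eq_of_forall_setIntegral_eq_of_sigmaFinite ?_ ?_ ?_
      · exact fun s _ _ => hKint.integrableOn
      · exact fun s _ _ => (hmfst ▸ hid_η).integrableOn
      · intro s hs _
        have hcond := Measure.setIntegral_condKernel_univ_right (ρ := m)
          (f := fun p : Ed d × Ed d => p.2) hs hmid.integrableOn
        rw [hcond]
        have hpre : g ⁻¹' (s ×ˢ (Set.univ : Set (Ed d)))
            = (T ⁻¹' s) ×ˢ (Set.univ : Set (Ed d)) := by
          ext p
          simp [hgdef]
        rw [hmdef, setIntegral_map (hs.prod MeasurableSet.univ)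
          continuous_snd.aestronglyMeasurable hgmeas.aemeasurable, hpre]
        have hstep : ∫ p in (T ⁻¹' s) ×ˢ (Set.univ : Set (Ed d)), ((g p).2) ∂(μ.compProd k)
            = ∫ x in T ⁻¹' s, ∫ y, y ∂k x ∂μ := by
          rw [Measure.setIntegral_compProd (hTm hs) MeasurableSet.univ hintc.integrableOn]
          simp [Measure.restrict_univ]
        rw [hstep]
        have hidm : AEStronglyMeasurable (fun z : Ed d => z) (Measure.map T μ) :=
          aestronglyMeasurable_id
        rw [hmfst, hηdef, setIntegral_map hs hidm hTm.aemeasurable]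
        refine setIntegral_congr_ae (hTm hs) ?_
        filter_upwards with x _
        rw [hTx x]
    have key' := key
    rw [hmfst] at key'
    exact key'
  have hK2 : ∀ᵐ z ∂η, Integrable (fun y => ‖y‖ ^ 2) (m.condKernel z) := by
    have h := MeasureTheory.Integrable.condKernel_ae (f := fun p : Ed d × Ed d => ‖p.2‖ ^ 2) hm2
    rwa [hmfst] at h
  have hSη : Integrable (fun z => ∫ y, ‖y‖ ^ 2 ∂m.condKernel z) η := by
    have h := MeasureTheory.Integrable.integral_condKernel
      (f := fun p : Ed d × Ed d => ‖p.2‖ ^ 2) hm2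
    rwa [hmfst] at h
  have hSν : ∫ z, ∫ y, ‖y‖ ^ 2 ∂m.condKernel z ∂η = ∫ y, ‖y‖ ^ 2 ∂ν := by
    have h := Measure.integral_condKernel (ρ := m) (f := fun p : Ed d × Ed d => ‖p.2‖ ^ 2) hm2
    rw [hmfst] at h
    rw [h, ← hmsnd, integral_map measurable_snd.aemeasurable
      (measurable_norm.pow_const 2).aestronglyMeasurable]
  have hlow : ∀ π : Measure (Ed d × Ed d), IsCoupling π μ η → cost (givenByMap μ T) ≤ cost π := by
    intro π hcπ
    haveI : IsProbabilityMeasure π := isProb_of_coupling hcπ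
    set K' : Kernel (Ed d × Ed d) (Ed d) := m.condKernel.comap Prod.snd measurable_snd
      with hK'def
    haveI : IsMarkovKernel K' := by rw [hK'def]; infer_instance
    have hq : Measurable fun q : (Ed d × Ed d) × Ed d => (q.1.1, q.2) :=
      (measurable_fst.comp measurable_fst).prodMk measurable_snd
    set π' : Measure (Ed d × Ed d) :=
      (π.compProd K').map (fun q : (Ed d × Ed d) × Ed d => (q.1.1, q.2)) with hπ'def
    have hπ'fst : π'.map Prod.fst = μ := by
      rw [hπ'def, Measure.map_map measurable_fst hq]
      have h1 : (Prod.fst ∘ fun q : (Ed d × Ed d) × Ed d => (q.1.1, q.2))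
          = Prod.fst ∘ Prod.fst := rfl
      rw [h1, ← Measure.map_map measurable_fst measurable_fst]
      have h2 : (π.compProd K').map Prod.fst = π := Measure.fst_compProd π K'
      rw [h2, hcπ.1]
    have hπ'snd : π'.map Prod.snd = ν := by
      rw [hπ'def, Measure.map_map measurable_snd hq]
      have h1 : (Prod.snd ∘ fun q : (Ed d × Ed d) × Ed d => (q.1.1, q.2)) = Prod.snd := rfl
      rw [h1]
      ext s hs
      rw [Measure.map_apply measurable_snd hs, Measure.compProd_apply (measurable_snd hs)]
      have h3 : ∀ p : Ed d × Ed d, K' p (Prod.mk p ⁻¹' (Prod.snd ⁻¹' s)) = m.condKernel p.2 s := by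
        intro p
        rw [hK'def, Kernel.comap_apply]
        rfl
      simp_rw [h3]
      rw [← lintegral_map (Kernel.measurable_coe m.condKernel hs) measurable_snd, hcπ.2, ← hmfst]
      have h4 : ∫⁻ z, m.condKernel z s ∂m.fst = (m.fst ⊗ₘ m.condKernel) (Prod.snd ⁻¹' s) := by
        rw [Measure.compProd_apply (measurable_snd hs)]
        rfl
      rw [h4, m.disintegrate m.condKernel, ← Measure.map_apply measurable_snd hs, hmsnd]
    have hcπ' : IsCoupling π' μ ν := ⟨hπ'fst, hπ'snd⟩
    have hint' : Integrable (fun p : Ed d × Ed d => ‖p.2 - p.1‖ ^ 2) π' :=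
      integrable_cost hcπ' hμ hν
    have hintq : Integrable (fun q : (Ed d × Ed d) × Ed d => ‖q.2 - q.1.1‖ ^ 2) (π.compProd K') := by
      have h := hint'
      rw [hπ'def, integrable_map_measure
        (show Measurable (fun p : Ed d × Ed d => ‖p.2 - p.1‖ ^ 2) by fun_prop).aestronglyMeasurable hq.aemeasurable] at h
      exact h
    have hc2 : cost π' = ∫ p, ∫ y, ‖y - p.1‖ ^ 2 ∂m.condKernel p.2 ∂π := by
      rw [cost, hπ'def, integral_map hq.aemeasurable
        (show Measurable (fun p : Ed d × Ed d => ‖p.2 - p.1‖ ^ 2) by fun_prop).aestronglyMeasurable,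
        Measure.integral_compProd hintq]
      refine integral_congr_ae (Eventually.of_forall fun p => ?_)
      simp only [hK'def, Kernel.comap_apply]
    have haeπ : ∀ᵐ p : Ed d × Ed d ∂π, Integrable (fun y => ‖y‖ ^ 2) (m.condKernel p.2)
        ∧ (∫ y, y ∂m.condKernel p.2) = p.2 := by
      have h0 : ∀ᵐ z ∂(π.map Prod.snd), Integrable (fun y => ‖y‖ ^ 2) (m.condKernel z)
          ∧ (∫ y, y ∂m.condKernel z) = z := by
        rw [hcπ.2]
        exact hK2.and hbary
      exact ae_of_ae_map measurable_snd.aemeasurable h0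
    have hps : ∀ᵐ p : Ed d × Ed d ∂π, ∫ y, ‖y - p.1‖ ^ 2 ∂m.condKernel p.2
        = ((∫ y, ‖y‖ ^ 2 ∂m.condKernel p.2) - ‖p.2‖ ^ 2) + ‖p.2 - p.1‖ ^ 2 := by
      filter_upwards [haeπ] with p hp
      rw [integral_norm_sub_sq' hp.1 p.1, hp.2]
    rw [integral_congr_ae hps] at hc2
    have hS2 : Integrable (fun z => (∫ y, ‖y‖ ^ 2 ∂m.condKernel z) - ‖z‖ ^ 2) η := hSη.sub hη2
    have hS2' := hS2
    rw [← hcπ.2] at hS2'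
    have hSπ : Integrable (fun p : Ed d × Ed d
        => (∫ y, ‖y‖ ^ 2 ∂m.condKernel p.2) - ‖p.2‖ ^ 2) π :=
      (integrable_map_measure hS2'.1 measurable_snd.aemeasurable).mp hS2'
    have hcostπ : Integrable (fun p : Ed d × Ed d => ‖p.2 - p.1‖ ^ 2) π :=
      integrable_cost hcπ hμ hη2
    rw [integral_add hSπ hcostπ] at hc2
    have hfirst : ∫ p : Ed d × Ed d, ((∫ y, ‖y‖ ^ 2 ∂m.condKernel p.2) - ‖p.2‖ ^ 2) ∂π
        = ∫ y, ‖y‖ ^ 2 ∂ν - ∫ z, ‖z‖ ^ 2 ∂η := by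
      have h := integral_map (φ := Prod.snd) (μ := π) measurable_snd.aemeasurable hS2'.1
      rw [hcπ.2] at h
      rw [← h, integral_sub hSη hη2, hSν]
    have hfin : cost π' = (∫ y, ‖y‖ ^ 2 ∂ν - ∫ z, ‖z‖ ^ 2 ∂η) + cost π := by
      rw [hc2, hfirst, cost]
    have hWν : W2sq μ ν ≤ cost π' := W2sq_le_cost hcπ'
    rw [← hcost] at hWν
    linarith [hWν, hfin, costA]
  -- conclusion
  have hW2η : W2sq μ η = cost (givenByMap μ T) := by
    refine le_antisymm (W2sq_le_cost hgmc) ?_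
    refine le_csInf ⟨_, ⟨givenByMap μ T, hgmc, rfl⟩⟩ ?_
    rintro c ⟨π, hπ, rfl⟩
    exact hlow π hπ
  constructor
  · rw [← hcost, costA, hW2η]; ring
  · exact ⟨hgmc, by rw [hW2η]⟩
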